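/- arXiv:2405.14669 — 2 statements merged into one kernel-verified Lean document; each statement's English description precedes it below -/
import Mathlib

section
/- There exists a constant C₁ > 0 (depending on the distribution) such that for all θ, L(f_θ) − L(f_{θ*}) ≤ C₁ (θ − θ*)²: the excess 0-1 risk of the threshold classifier is locally and globally quadratically bounded, since the function h(s) = (∫_{−c}^{c} dF − ∫_{s−c}^{s+c} dF)/s² extends continuously at s = 0 and is bounded on ℝ when F has a bounded, Lipschitz density. -/
open Real intervalIntegral

/-- Quadratic bound on the excess 0-1 risk of the threshold classifier: if `F` has a bounded,
Lipschitz density `f`, `c > 0`, and the (nonnegative) excess risk at standardized offset `s` is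
`E(s) = ((F(c)−F(−c)) − (F(s+c)−F(s−c)))/2`, then there is `C₁ > 0` with `E(s) ≤ C₁ s²`
for all `s`. -/
theorem stmt9 (F f : ℝ → ℝ) (M K c : ℝ) (hc : 0 < c)
    (hdf : ∀ a b : ℝ, F b - F a = ∫ x in a..b, f x)
    (hfpos : ∀ x, 0 ≤ f x)
    (hfb : ∀ x, f x ≤ M)
    (hlip : LipschitzWith (Real.toNNReal K) f)
    (E : ℝ → ℝ)
    (hE : ∀ s, E s = ((F c - F (-c)) - (F (s + c) - F (s - c))) / 2)
    (hEnonneg : ∀ s, 0 ≤ E s) :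
    ∃ C₁ > 0, ∀ s, E s ≤ C₁ * s ^ 2 := by
  have hcont : Continuous f := hlip.continuous
  set Kr : ℝ := (Real.toNNReal K : ℝ) with hKrdef
  have hK0 : 0 ≤ Kr := (Real.toNNReal K).coe_nonneg
  have hfl : ∀ x y : ℝ, |f x - f y| ≤ Kr * |x - y| := by
    intro x y
    have h := hlip.dist_le_mul x y
    rw [Real.dist_eq, Real.dist_eq] at h
    exact h
  set g : ℝ → ℝ := fun t => f (t - c) - f (t + c) with hg_def
  have hgcont : Continuous g :=
    (hcont.comp (continuous_id.sub continuous_const)).sub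
      (hcont.comp (continuous_id.add continuous_const))
  have hgint : ∀ a b : ℝ, IntervalIntegrable g MeasureTheory.volume a b :=
    fun a b => hgcont.intervalIntegrable a b
  have hgb : ∀ t : ℝ, |g t - g 0| ≤ 2 * Kr * |t| := by
    intro t
    have h1 : |f (t - c) - f (-c)| ≤ Kr * |t| := by
      have h := hfl (t - c) (-c)
      have e : t - c - -c = t := by ring
      rwa [e] at h
    have h2 : |f (t + c) - f c| ≤ Kr * |t| := by
      have h := hfl (t + c) c
      have e : t + c - c = t := by ring
      rwa [e] at h
    have hg0v : g 0 = f (-c) - f c := by simp [hg_def]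
    calc |g t - g 0| = |(f (t - c) - f (-c)) - (f (t + c) - f c)| := by
          rw [hg0v]; show |f (t - c) - f (t + c) - (f (-c) - f c)| = _; ring_nf
      _ ≤ |f (t - c) - f (-c)| + |f (t + c) - f c| := abs_sub _ _
      _ ≤ Kr * |t| + Kr * |t| := add_le_add h1 h2
      _ = 2 * Kr * |t| := by ring
  -- E in terms of g
  have hEg : ∀ s : ℝ, E s = (∫ t in (0:ℝ)..s, g t) / 2 := by
    intro s
    have h1 : F (s - c) - F (-c) = ∫ x in (-c)..(s - c), f x := hdf _ _
    have h2 : F (s + c) - F c = ∫ x in c..(s + c), f x := hdf _ _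
    have h3 : (∫ t in (0:ℝ)..s, f (t - c)) = ∫ x in (-c)..(s - c), f x := by
      rw [intervalIntegral.integral_comp_sub_right (fun x => f x) c]
      norm_num
    have h4 : (∫ t in (0:ℝ)..s, f (t + c)) = ∫ x in c..(s + c), f x := by
      rw [intervalIntegral.integral_comp_add_right (fun x => f x) c]
      norm_num
    have h5 : (∫ t in (0:ℝ)..s, g t)
        = (∫ t in (0:ℝ)..s, f (t - c)) - ∫ t in (0:ℝ)..s, f (t + c) := by
      rw [hg_def]
      exact intervalIntegral.integral_sub
        ((hcont.comp (continuous_id.sub continuous_const)).intervalIntegrable 0 s)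
        ((hcont.comp (continuous_id.add continuous_const)).intervalIntegrable 0 s)
    rw [hE s, h5, h3, h4, ← h1, ← h2]
    ring
  -- integral of the affine comparison function
  have hlin_int : ∀ a b : ℝ,
      IntervalIntegrable (fun t : ℝ => g 0 + 2 * Kr * t) MeasureTheory.volume a b :=
    fun a b => (continuous_const.add (continuous_const.mul continuous_id)).intervalIntegrable a b
  have hcalc : ∀ a b : ℝ,
      (∫ t in a..b, (g 0 + 2 * Kr * t)) = (b - a) * g 0 + Kr * (b ^ 2 - a ^ 2) := by
    intro a b
    have hc2 : IntervalIntegrable (fun t : ℝ => 2 * Kr * t) MeasureTheory.volume a b :=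
      (continuous_const.mul continuous_id).intervalIntegrable a b
    rw [intervalIntegral.integral_add intervalIntegrable_const hc2,
      intervalIntegral.integral_const, intervalIntegral.integral_const_mul, integral_id]
    simp [smul_eq_mul]
    ring
  -- key upper bound
  have hub : ∀ s : ℝ, (∫ t in (0:ℝ)..s, g t) ≤ s * g 0 + Kr * s ^ 2 := by
    intro s
    rcases le_total 0 s with hs | hs
    · have hpt : ∀ x ∈ Set.Icc (0:ℝ) s, g x ≤ g 0 + 2 * Kr * x := by
        intro x hx
        have h := hgb x
        have hx0 : |x| = x := abs_of_nonneg hx.1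
        rw [hx0] at h
        have := (abs_le.mp h).2
        linarith
      have := intervalIntegral.integral_mono_on hs (hgint 0 s) (hlin_int 0 s) hpt
      rw [hcalc 0 s] at this
      nlinarith
    · have hpt : ∀ x ∈ Set.Icc s (0:ℝ), g 0 + 2 * Kr * x ≤ g x := by
        intro x hx
        have h := hgb x
        have hx0 : |x| = -x := abs_of_nonpos hx.2
        rw [hx0] at h
        have := (abs_le.mp h).1
        linarith
      have hm := intervalIntegral.integral_mono_on hs (hlin_int s 0) (hgint s 0) hpt
      rw [hcalc s 0] at hm
      have hsym : (∫ t in (0:ℝ)..s, g t) = -∫ t in s..(0:ℝ), g t :=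
        intervalIntegral.integral_symm s 0
      rw [hsym]
      nlinarith
  have hnn : ∀ s : ℝ, 0 ≤ ∫ t in (0:ℝ)..s, g t := by
    intro s
    have h := hEnonneg s
    rw [hEg s] at h
    linarith
  clear_value Kr g
  -- g 0 = 0
  have habs : ∀ u : ℝ, 0 < u → -(Kr * u) ≤ g 0 ∧ g 0 ≤ Kr * u := by
    intro u hu
    constructor
    · have h1 := hnn u
      have h2 := hub u
      nlinarith
    · have h1 := hnn (-u)
      have h2 := hub (-u)
      nlinarith
  have hg0 : g 0 = 0 := by
    have hsmall : ∀ ε : ℝ, 0 < ε → |g 0| ≤ 0 + ε := by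
      intro ε hε
      have hKp : (0:ℝ) < Kr + 1 := by linarith
      have hu : 0 < ε / (Kr + 1) := div_pos hε hKp
      obtain ⟨h1, h2⟩ := habs _ hu
      have h7 : Kr * (ε / (Kr + 1)) ≤ ε := by
        rw [← mul_div_assoc, div_le_iff₀ hKp]
        nlinarith
      rw [zero_add]
      exact abs_le.mpr ⟨by linarith, by linarith⟩
    have h0 : |g 0| ≤ 0 := le_of_forall_pos_le_add hsmall
    exact abs_eq_zero.mp (le_antisymm h0 (abs_nonneg _))
  refine ⟨Kr + 1, by linarith, fun s => ?_⟩
  have h1 := hub s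
  rw [hg0] at h1
  rw [hEg s]
  nlinarith [sq_nonneg s]
end

section
/- If ℓ: ℝ → [0,1] is 1-Lipschitz, then for any sample S and any function class H, the empirical Rademacher complexity satisfies R_S(ℓ ∘ H) ≤ R_S(H) (Talagrand's contraction lemma applied to 1-Lipschitz ℓ). -/
open Real

/-- Empirical Rademacher complexity of a class `F` of real-valued functions on a sample `S`. -/
noncomputable def radComp {Z : Type*} {m : ℕ} (S : Fin m → Z) (F : Set (Z → ℝ)) : ℝ :=
  (1 / (m : ℝ)) * ((1 / 2 ^ m) * ∑ σ : Fin m → Bool,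
    sSup ((fun f : Z → ℝ => ∑ i, (if σ i then (1 : ℝ) else -1) * f (S i)) '' F))


section Aux

variable {Z : Type*} {m : ℕ}

noncomputable def mix (S : Fin m → Z) (ℓ : ℝ → ℝ) (k : ℕ) (σ : Fin m → Bool) (h : Z → ℝ) : ℝ :=
  ∑ i, (if σ i then (1 : ℝ) else -1) * (if (i : ℕ) < k then h (S i) else ℓ (h (S i)))

lemma key_lemma {ι : Type*} {H : Set ι} (hne : H.Nonempty) (A B : ι → ℝ) {ℓ : ℝ → ℝ}
    (hℓ : ∀ x y : ℝ, ℓ x - ℓ y ≤ |x - y|)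
    (h1 : BddAbove ((fun h => A h + B h) '' H))
    (h2 : BddAbove ((fun h => A h - B h) '' H)) :
    sSup ((fun h => A h + ℓ (B h)) '' H) + sSup ((fun h => A h - ℓ (B h)) '' H)
      ≤ sSup ((fun h => A h + B h) '' H) + sSup ((fun h => A h - B h) '' H) := by
  set R1 := sSup ((fun h => A h + B h) '' H) with hR1
  set R2 := sSup ((fun h => A h - B h) '' H) with hR2
  have h3 : sSup ((fun h => A h + ℓ (B h)) '' H)
      ≤ (R1 + R2) - sSup ((fun h => A h - ℓ (B h)) '' H) := by
    apply csSup_le (hne.image _)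
    rintro x ⟨h, hh, rfl⟩
    rw [le_sub_comm]
    apply csSup_le (hne.image _)
    rintro y ⟨h', hh', rfl⟩
    show A h' - ℓ (B h') ≤ R1 + R2 - (A h + ℓ (B h))
    have hA1 : A h + B h ≤ R1 := le_csSup h1 ⟨h, hh, rfl⟩
    have hA2 : A h' - B h' ≤ R2 := le_csSup h2 ⟨h', hh', rfl⟩
    have hB1 : A h' + B h' ≤ R1 := le_csSup h1 ⟨h', hh', rfl⟩
    have hB2 : A h - B h ≤ R2 := le_csSup h2 ⟨h, hh, rfl⟩
    have hl := hℓ (B h) (B h')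
    rcases abs_cases (B h - B h') with ⟨he, _⟩ | ⟨he, _⟩ <;> linarith
  linarith

lemma mixBdd (S : Fin m → Z) (H : Set (Z → ℝ)) (ℓ : ℝ → ℝ)
    (hℓb : ∀ r, ℓ r ∈ Set.Icc (0 : ℝ) 1)
    (hBdd : ∀ σ : Fin m → Bool,
      BddAbove ((fun h : Z → ℝ => ∑ i, (if σ i then (1 : ℝ) else -1) * h (S i)) '' H))
    (j : ℕ) (σ : Fin m → Bool) : BddAbove (mix S ℓ j σ '' H) := by
  set σ'' : Fin m → Bool := fun i => if (i : ℕ) < j then σ i else !(σ i) with hσ''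
  obtain ⟨c1, hc1⟩ := hBdd σ
  obtain ⟨c2, hc2⟩ := hBdd σ''
  refine ⟨(c1 + c2) / 2 + m, ?_⟩
  rintro x ⟨h, hh, rfl⟩
  have e1 : (∑ i : Fin m, (if σ i then (1 : ℝ) else -1) * h (S i)) ≤ c1 :=
    hc1 ⟨h, hh, rfl⟩
  have e2 : (∑ i : Fin m, (if σ'' i then (1 : ℝ) else -1) * h (S i)) ≤ c2 :=
    hc2 ⟨h, hh, rfl⟩
  have split : mix S ℓ j σ h
      = ∑ i : Fin m, (if (i : ℕ) < j then (if σ i then (1 : ℝ) else -1) * h (S i) else 0)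
      + ∑ i : Fin m, (if (i : ℕ) < j then 0 else (if σ i then (1 : ℝ) else -1) * ℓ (h (S i))) := by
    rw [mix, ← Finset.sum_add_distrib]
    apply Finset.sum_congr rfl
    intro i _
    by_cases hij : (i : ℕ) < j <;> simp [hij]
  have half : ∑ i : Fin m, (if (i : ℕ) < j then (if σ i then (1 : ℝ) else -1) * h (S i) else 0)
      = ((∑ i : Fin m, (if σ i then (1 : ℝ) else -1) * h (S i))
        + (∑ i : Fin m, (if σ'' i then (1 : ℝ) else -1) * h (S i))) / 2 := by
    rw [← Finset.sum_add_distrib, Finset.sum_div]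
    apply Finset.sum_congr rfl
    intro i _
    by_cases hij : (i : ℕ) < j
    · simp only [hσ'', hij, if_true]
      ring
    · simp only [hσ'', hij, if_false]
      cases σ i <;> simp
  have bnd : ∑ i : Fin m, (if (i : ℕ) < j then (0:ℝ) else (if σ i then (1 : ℝ) else -1) * ℓ (h (S i)))
      ≤ m := by
    calc ∑ i : Fin m, (if (i : ℕ) < j then (0:ℝ) else (if σ i then (1 : ℝ) else -1) * ℓ (h (S i)))
        ≤ ∑ _i : Fin m, (1:ℝ) := by
          apply Finset.sum_le_sum
          intro i _
          obtain ⟨hl0, hl1⟩ := hℓb (h (S i))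
          by_cases hij : (i : ℕ) < j
          · simp [hij]
          · simp only [hij, if_false]
            cases σ i <;> simp <;> linarith
      _ = m := by simp
  rw [split, half]
  linarith

variable (S : Fin m → Z) (H : Set (Z → ℝ)) (ℓ : ℝ → ℝ)

lemma step_lemma (hℓ : LipschitzWith 1 ℓ) (hℓb : ∀ r, ℓ r ∈ Set.Icc (0 : ℝ) 1)
    (hBdd : ∀ σ : Fin m → Bool,
      BddAbove ((fun h : Z → ℝ => ∑ i, (if σ i then (1 : ℝ) else -1) * h (S i)) '' H))
    (k : ℕ) (hk : k < m) :
    ∑ σ : Fin m → Bool, sSup (mix S ℓ k σ '' H)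
      ≤ ∑ σ : Fin m → Bool, sSup (mix S ℓ (k + 1) σ '' H) := by
  rcases H.eq_empty_or_nonempty with rfl | hne
  · simp
  have hlip : ∀ x y : ℝ, ℓ x - ℓ y ≤ |x - y| := by
    intro x y
    have := hℓ.dist_le_mul x y
    rw [Real.dist_eq, Real.dist_eq] at this
    simp only [NNReal.coe_one, one_mul] at this
    calc ℓ x - ℓ y ≤ |ℓ x - ℓ y| := le_abs_self _
      _ ≤ |x - y| := this
  set κ : Fin m := ⟨k, hk⟩ with hκ
  set flip : (Fin m → Bool) → (Fin m → Bool) := fun σ => Function.update σ κ (!(σ κ)) with hflip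
  have hinv : Function.Involutive flip := by
    intro σ
    funext i
    by_cases hi : i = κ
    · subst hi; simp [hflip]
    · simp [hflip, Function.update_of_ne hi]
  have hupd : ∀ σ : Fin m → Bool, flip σ κ = !(σ κ) := by
    intro σ; simp [hflip]
  set e : Equiv.Perm (Fin m → Bool) := hinv.toPerm flip with he
  have hc1 : ¬ ((κ : ℕ) < k) := by simp [hκ]
  have hc2 : (κ : ℕ) < k + 1 := by simp [hκ]
  have point : ∀ σ : Fin m → Bool,
      sSup (mix S ℓ k σ '' H) + sSup (mix S ℓ k (flip σ) '' H)
        ≤ sSup (mix S ℓ (k+1) σ '' H) + sSup (mix S ℓ (k+1) (flip σ) '' H) := by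
    intro σ
    set A : (Z → ℝ) → ℝ := fun h =>
      ∑ i ∈ ({κ}ᶜ : Finset (Fin m)),
        (if σ i then (1 : ℝ) else -1) * (if (i : ℕ) < k then h (S i) else ℓ (h (S i))) with hA
    set B : (Z → ℝ) → ℝ := fun h => h (S κ) with hB
    have tail_eq : ∀ (h : Z → ℝ),
        ∑ i ∈ ({κ}ᶜ : Finset (Fin m)),
          (if σ i then (1 : ℝ) else -1) * (if (i : ℕ) < k + 1 then h (S i) else ℓ (h (S i)))
          = A h := by
      intro h
      apply Finset.sum_congr rfl
      intro i hi
      have hik : (i : ℕ) ≠ k := by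
        intro hcon
        apply Finset.mem_compl.mp hi
        simp [Fin.ext_iff, hcon, hκ]
      congr 1
      exact if_congr (by omega) rfl rfl
    have tail_flip : ∀ (h : Z → ℝ) (j : ℕ),
        ∑ i ∈ ({κ}ᶜ : Finset (Fin m)),
          (if flip σ i then (1 : ℝ) else -1) * (if (i : ℕ) < j then h (S i) else ℓ (h (S i)))
          = ∑ i ∈ ({κ}ᶜ : Finset (Fin m)),
          (if σ i then (1 : ℝ) else -1) * (if (i : ℕ) < j then h (S i) else ℓ (h (S i))) := by
      intro h j
      apply Finset.sum_congr rfl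
      intro i hi
      have : flip σ i = σ i := Function.update_of_ne (by simpa using hi) _ _
      rw [this]
    cases hb : σ κ
    · -- σ κ = false
      have f1 : mix S ℓ k σ = fun h => A h - ℓ (B h) := by
        funext h
        rw [mix, Fintype.sum_eq_add_sum_compl κ, if_neg hc1, hb]
        show (-1 : ℝ) * ℓ (B h) + A h = A h - ℓ (B h)
        ring
      have f2 : mix S ℓ k (flip σ) = fun h => A h + ℓ (B h) := by
        funext h
        rw [mix, Fintype.sum_eq_add_sum_compl κ, if_neg hc1, hupd σ, hb, tail_flip h k]
        show (1 : ℝ) * ℓ (B h) + A h = A h + ℓ (B h)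
        ring
      have f3 : mix S ℓ (k+1) σ = fun h => A h - B h := by
        funext h
        rw [mix, Fintype.sum_eq_add_sum_compl κ, if_pos hc2, hb, tail_eq h]
        show (-1 : ℝ) * B h + A h = A h - B h
        ring
      have f4 : mix S ℓ (k+1) (flip σ) = fun h => A h + B h := by
        funext h
        rw [mix, Fintype.sum_eq_add_sum_compl κ, if_pos hc2, hupd σ, hb, tail_flip h (k+1), tail_eq h]
        show (1 : ℝ) * B h + A h = A h + B h
        ring
      have hb1 : BddAbove ((fun h => A h + B h) '' H) := by
        rw [← f4]; exact mixBdd S H ℓ hℓb hBdd (k+1) (flip σ)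
      have hb2 : BddAbove ((fun h => A h - B h) '' H) := by
        rw [← f3]; exact mixBdd S H ℓ hℓb hBdd (k+1) σ
      have := key_lemma hne A B hlip hb1 hb2
      rw [f1, f2, f3, f4]
      linarith
    · -- σ κ = true
      have f1 : mix S ℓ k σ = fun h => A h + ℓ (B h) := by
        funext h
        rw [mix, Fintype.sum_eq_add_sum_compl κ, if_neg hc1, hb]
        show (1 : ℝ) * ℓ (B h) + A h = A h + ℓ (B h)
        ring
      have f2 : mix S ℓ k (flip σ) = fun h => A h - ℓ (B h) := by
        funext h
        rw [mix, Fintype.sum_eq_add_sum_compl κ, if_neg hc1, hupd σ, hb, tail_flip h k]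
        show (-1 : ℝ) * ℓ (B h) + A h = A h - ℓ (B h)
        ring
      have f3 : mix S ℓ (k+1) σ = fun h => A h + B h := by
        funext h
        rw [mix, Fintype.sum_eq_add_sum_compl κ, if_pos hc2, hb, tail_eq h]
        show (1 : ℝ) * B h + A h = A h + B h
        ring
      have f4 : mix S ℓ (k+1) (flip σ) = fun h => A h - B h := by
        funext h
        rw [mix, Fintype.sum_eq_add_sum_compl κ, if_pos hc2, hupd σ, hb, tail_flip h (k+1), tail_eq h]
        show (-1 : ℝ) * B h + A h = A h - B h
        ring
      have hb1 : BddAbove ((fun h => A h + B h) '' H) := by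
        rw [← f3]; exact mixBdd S H ℓ hℓb hBdd (k+1) σ
      have hb2 : BddAbove ((fun h => A h - B h) '' H) := by
        rw [← f4]; exact mixBdd S H ℓ hℓb hBdd (k+1) (flip σ)
      have := key_lemma hne A B hlip hb1 hb2
      rw [f1, f2, f3, f4]
      linarith
  have pair : ∀ F : (Fin m → Bool) → ℝ,
      (∑ σ : Fin m → Bool, F σ) + (∑ σ : Fin m → Bool, F σ)
        = ∑ σ : Fin m → Bool, (F σ + F (flip σ)) := by
    intro F
    rw [Finset.sum_add_distrib]
    congr 1
    exact (Equiv.sum_comp e F).symm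
  have sum_le : ∑ σ : Fin m → Bool, (sSup (mix S ℓ k σ '' H) + sSup (mix S ℓ k (flip σ) '' H))
      ≤ ∑ σ : Fin m → Bool, (sSup (mix S ℓ (k+1) σ '' H) + sSup (mix S ℓ (k+1) (flip σ) '' H)) :=
    Finset.sum_le_sum (fun σ _ => point σ)
  have p1 := pair (fun σ => sSup (mix S ℓ k σ '' H))
  have p2 := pair (fun σ => sSup (mix S ℓ (k+1) σ '' H))
  linarith

lemma main_lemma (hℓ : LipschitzWith 1 ℓ) (hℓb : ∀ r, ℓ r ∈ Set.Icc (0 : ℝ) 1)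
    (hBdd : ∀ σ : Fin m → Bool,
      BddAbove ((fun h : Z → ℝ => ∑ i, (if σ i then (1 : ℝ) else -1) * h (S i)) '' H))
    (k : ℕ) (hk : k ≤ m) :
    ∑ σ : Fin m → Bool, sSup (mix S ℓ 0 σ '' H)
      ≤ ∑ σ : Fin m → Bool, sSup (mix S ℓ k σ '' H) := by
  induction k with
  | zero => exact le_refl _
  | succ n ih =>
      exact (ih (by omega)).trans (step_lemma S H ℓ hℓ hℓb hBdd n (by omega))

end Aux

/-- Talagrand's contraction: if `ℓ : ℝ → [0,1]` is 1-Lipschitz, then for any sample `S` and any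
class `H`, `R_S(ℓ ∘ H) ≤ R_S(H)`. -/
theorem stmt11 {Z : Type*} {m : ℕ} (S : Fin m → Z) (H : Set (Z → ℝ)) (ℓ : ℝ → ℝ)
    (hℓ : LipschitzWith 1 ℓ) (hℓb : ∀ r, ℓ r ∈ Set.Icc (0 : ℝ) 1)
    (hBdd : ∀ σ : Fin m → Bool,
      BddAbove ((fun h : Z → ℝ => ∑ i, (if σ i then (1 : ℝ) else -1) * h (S i)) '' H)) :
    radComp S ((fun h : Z → ℝ => ℓ ∘ h) '' H) ≤ radComp S H := by
  have himg1 : ∀ σ : Fin m → Bool,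
      ((fun f : Z → ℝ => ∑ i, (if σ i then (1 : ℝ) else -1) * f (S i)) ''
        ((fun h : Z → ℝ => ℓ ∘ h) '' H)) = mix S ℓ 0 σ '' H := by
    intro σ
    rw [← Set.image_comp]
    congr 1
  have himg2 : ∀ σ : Fin m → Bool,
      ((fun f : Z → ℝ => ∑ i, (if σ i then (1 : ℝ) else -1) * f (S i)) '' H)
        = mix S ℓ m σ '' H := by
    intro σ
    congr 1
    funext h
    simp [mix, Fin.is_lt]
  rw [radComp, radComp]
  apply mul_le_mul_of_nonneg_left _ (by positivity)
  apply mul_le_mul_of_nonneg_left _ (by positivity)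
  calc ∑ σ : Fin m → Bool,
        sSup ((fun f : Z → ℝ => ∑ i, (if σ i then (1 : ℝ) else -1) * f (S i)) ''
          ((fun h : Z → ℝ => ℓ ∘ h) '' H))
      = ∑ σ : Fin m → Bool, sSup (mix S ℓ 0 σ '' H) := by
        apply Finset.sum_congr rfl; intro σ _; rw [himg1 σ]
    _ ≤ ∑ σ : Fin m → Bool, sSup (mix S ℓ m σ '' H) :=
        main_lemma S H ℓ hℓ hℓb hBdd m le_rfl
    _ = ∑ σ : Fin m → Bool,
        sSup ((fun f : Z → ℝ => ∑ i, (if σ i then (1 : ℝ) else -1) * f (S i)) '' H) := by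
        apply Finset.sum_congr rfl; intro σ _; rw [himg2 σ]
end
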